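/- Let (A,d,⟨·,·⟩) be a cochain complex with pairing. If A is of Hodge type and the induced pairing on the cohomology H(A) is nondegenerate, then the degenerate subspace A_deg ⊆ A is an acyclic subcomplex (its cohomology vanishes) and the quotient map π_Q : A → Q(A) onto the nondegenerate quotient is a quasi-isomorphism. -/

import Mathlib

noncomputable section

/-- A cochain complex over `ℝ` (with a `ℤ`-grading realized as an internal direct sum
of submodules) together with a graded-symmetric pairing of degree `n` compatible with
the differential. -/
structure PairedComplex (A : Type*) [AddCommGroup A] [Module ℝ A] where
  /-- the grading `A = ⊕ᵢ Aⁱ` -/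
  grading : ℤ → Submodule ℝ A
  internal : DirectSum.IsInternal grading
  /-- the differential -/
  d : A →ₗ[ℝ] A
  d_degree : ∀ i : ℤ, ∀ x ∈ grading i, d x ∈ grading (i + 1)
  d_sq : ∀ x : A, d (d x) = 0
  /-- the degree of the pairing -/
  n : ℤ
  /-- the pairing -/
  pair : A →ₗ[ℝ] A →ₗ[ℝ] ℝ
  pair_degree : ∀ i j : ℤ, i + j ≠ n → ∀ x ∈ grading i, ∀ y ∈ grading j, pair x y = 0
  pair_symm : ∀ i j : ℤ, ∀ x ∈ grading i, ∀ y ∈ grading j,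
      pair x y = (-1 : ℝ) ^ (i * j) * pair y x
  pair_d : ∀ i : ℤ, ∀ x ∈ grading i, ∀ y : A,
      pair (d x) y = (-1 : ℝ) ^ (1 + i) * pair x (d y)

namespace PairedComplex

variable {A : Type*} [AddCommGroup A] [Module ℝ A] (X : PairedComplex A)

/-- `f` is homogeneous of degree `k`. -/
def IsDegree (f : A →ₗ[ℝ] A) (k : ℤ) : Prop :=
  ∀ i : ℤ, ∀ x ∈ X.grading i, f x ∈ X.grading (i + k)

/-- A chain map: a degree `0` map commuting with the differential. -/
def IsChainMap (f : A →ₗ[ℝ] A) : Prop :=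
  X.IsDegree f 0 ∧ ∀ x : A, f (X.d x) = X.d (f x)

/-- A projection: an idempotent chain map. -/
def IsProjection (p : A →ₗ[ℝ] A) : Prop :=
  X.IsChainMap p ∧ ∀ x : A, p (p x) = p x

/-- The projection `π_P = id + d∘P + P∘d` associated to a homotopy operator `P`. -/
def assocProj (P : A →ₗ[ℝ] A) : A →ₗ[ℝ] A :=
  LinearMap.id + X.d ∘ₗ P + P ∘ₗ X.d

/-- A homotopy operator: a degree `-1` map such that `−d∘P − P∘d` is a projection. -/
def IsHomotopyOperator (P : A →ₗ[ℝ] A) : Prop :=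
  X.IsDegree P (-1) ∧ X.IsProjection (-(X.d ∘ₗ P) - P ∘ₗ X.d)

/-- A homotopy operator `P` is special if `P∘P = 0` and `P∘d∘P = −P`. -/
def IsSpecial (P : A →ₗ[ℝ] A) : Prop :=
  (∀ x : A, P (P x) = 0) ∧ ∀ x : A, P (X.d (P x)) = -(P x)

/-- The symmetry property `⟨Px,y⟩ = (−1)^{deg x} ⟨x,Py⟩` of a propagator. -/
def IsSymmetricDeg (P : A →ₗ[ℝ] A) : Prop :=
  ∀ i : ℤ, ∀ x ∈ X.grading i, ∀ y : A,
    X.pair (P x) y = (-1 : ℝ) ^ i * X.pair x (P y)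

/-- A propagator: a homotopy operator satisfying the symmetry property. -/
def IsPropagator (P : A →ₗ[ℝ] A) : Prop :=
  X.IsHomotopyOperator P ∧ X.IsSymmetricDeg P

/-- A symmetric operator: `⟨px,y⟩ = ⟨x,py⟩`. -/
def IsSymmetric (p : A →ₗ[ℝ] A) : Prop :=
  ∀ x y : A, X.pair (p x) y = X.pair x (p y)

/-- Nondegeneracy of the pairing. -/
def Nondegenerate : Prop :=
  ∀ x : A, (∀ y : A, X.pair x y = 0) → x = 0

/-- The pairing is perfect: the musical map `x ↦ ⟨x,·⟩` is an isomorphism onto the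
graded dual, i.e. it is injective and every linear functional on `A^{n-i}` is
represented by an element of `A^i`. -/
def Perfect : Prop :=
  X.Nondegenerate ∧
    ∀ i : ℤ, ∀ φ : ↥(X.grading (X.n - i)) →ₗ[ℝ] ℝ,
      ∃ x ∈ X.grading i, ∀ y : ↥(X.grading (X.n - i)), X.pair x (y : A) = φ y

/-- A chain map induces an isomorphism on cohomology (elementwise formulation). -/
def IsQuasiIso (f : A →ₗ[ℝ] A) : Prop :=
  (∀ x : A, X.d x = 0 → ∃ y : A, X.d y = 0 ∧ ∃ z : A, f y - x = X.d z) ∧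
  (∀ y : A, X.d y = 0 → (∃ z : A, f y = X.d z) → ∃ w : A, y = X.d w)

/-- A graded subspace: spanned by its homogeneous elements. -/
def IsGradedSubspace (B : Submodule ℝ A) : Prop :=
  ∀ x ∈ B, x ∈ ⨆ i : ℤ, B ⊓ X.grading i

/-- A subcomplex: a graded subspace preserved by the differential. -/
def IsSubcomplex (B : Submodule ℝ A) : Prop :=
  X.IsGradedSubspace B ∧ ∀ x ∈ B, X.d x ∈ B

/-- The inclusion `B ↪ A` is a quasi-isomorphism (elementwise formulation). -/
def InclQuasiIso (B : Submodule ℝ A) : Prop :=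
  (∀ x : A, X.d x = 0 → ∃ b ∈ B, X.d b = 0 ∧ ∃ z : A, x - b = X.d z) ∧
  (∀ b ∈ B, X.d b = 0 → (∃ z : A, b = X.d z) → ∃ c ∈ B, b = X.d c)

/-- The restriction of the pairing to `B` is perfect. -/
def SubPerfect (B : Submodule ℝ A) : Prop :=
  (∀ x ∈ B, (∀ y ∈ B, X.pair x y = 0) → x = 0) ∧
    ∀ i : ℤ, ∀ φ : ↥(B ⊓ X.grading (X.n - i)) →ₗ[ℝ] ℝ,
      ∃ x ∈ B ⊓ X.grading i, ∀ y : ↥(B ⊓ X.grading (X.n - i)), X.pair x (y : A) = φ y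

/-- The orthogonal complement `B^⊥ = {x | ⟨x,b⟩ = 0 ∀ b ∈ B}`. -/
def perp (B : Submodule ℝ A) : Submodule ℝ A where
  carrier := {x : A | ∀ b ∈ B, X.pair x b = 0}
  add_mem' := by
    intro x y hx hy
    intro b hb
    have hx' := hx b hb
    have hy' := hy b hb
    simp only [map_add, LinearMap.add_apply, hx', hy', add_zero]
  zero_mem' := by
    intro b hb
    simp
  smul_mem' := by
    intro c x hx b hb
    have hx' := hx b hb
    simp only [map_smul, LinearMap.smul_apply, hx', smul_zero]

/-- A harmonic subspace: a graded subspace `H` with `ker d = H ⊕ im d`. -/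
def IsHarmonic (H : Submodule ℝ A) : Prop :=
  X.IsGradedSubspace H ∧ H ≤ LinearMap.ker X.d ∧
    H ⊓ LinearMap.range X.d = ⊥ ∧ H ⊔ LinearMap.range X.d = LinearMap.ker X.d

/-- A Hodge decomposition `B = H ⊕ d(B) ⊕ C` of a subcomplex `B ⊆ A` (with respect to
the restricted pairing); taking `B = ⊤` gives a Hodge decomposition of `A`. -/
def IsHodgeOn (B H C : Submodule ℝ A) : Prop :=
  H ≤ B ∧ C ≤ B ∧ X.IsGradedSubspace H ∧ X.IsGradedSubspace C ∧
  H ≤ LinearMap.ker X.d ∧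
  H ⊓ Submodule.map X.d B = ⊥ ∧
  H ⊔ Submodule.map X.d B = LinearMap.ker X.d ⊓ B ∧
  C ⊓ LinearMap.ker X.d = ⊥ ∧
  C ⊔ (LinearMap.ker X.d ⊓ B) = B ∧
  (∀ c ∈ C, ∀ c' ∈ C, X.pair c c' = 0) ∧
  (∀ c ∈ C, ∀ h ∈ H, X.pair c h = 0)

/-- A Hodge decomposition `A = H ⊕ im d ⊕ C` of the full complex. -/
def IsHodge (H C : Submodule ℝ A) : Prop :=
  X.IsHodgeOn ⊤ H C

/-- `A` is of Hodge type if it admits a Hodge decomposition. -/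
def IsHodgeType : Prop :=
  ∃ H C : Submodule ℝ A, X.IsHodge H C

/-- The operator `P_{H,C}` canonically associated to a Hodge decomposition `(H,C)`:
`P(dy) = −y` for `y ∈ C`, and `P = 0` on `H ⊕ C`. -/
def IsHodgeOperator (H C : Submodule ℝ A) (P : A →ₗ[ℝ] A) : Prop :=
  (∀ y ∈ C, P (X.d y) = -y) ∧ (∀ x ∈ H, P x = 0) ∧ ∀ x ∈ C, P x = 0

/-- The degenerate subspace `A_deg = {a | ⟨a,x⟩ = 0 ∀ x}`. -/
def degSub : Submodule ℝ A := X.perp ⊤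

/-- The induced pairing on cohomology is nondegenerate (elementwise formulation). -/
def CohomNondeg : Prop :=
  ∀ x : A, X.d x = 0 → (∀ y : A, X.d y = 0 → X.pair x y = 0) → ∃ z : A, x = X.d z

/-- The induced pairing on cohomology is perfect (elementwise formulation). -/
def CohomPerfect : Prop :=
  X.CohomNondeg ∧
    ∀ i : ℤ, ∀ φ : ↥(LinearMap.ker X.d ⊓ X.grading (X.n - i)) →ₗ[ℝ] ℝ,
      (∀ y : ↥(LinearMap.ker X.d ⊓ X.grading (X.n - i)),
          (∃ z : A, (y : A) = X.d z) → φ y = 0) →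
      ∃ x ∈ LinearMap.ker X.d ⊓ X.grading i,
        ∀ y : ↥(LinearMap.ker X.d ⊓ X.grading (X.n - i)), X.pair x (y : A) = φ y

end PairedComplex

namespace PairedComplex

variable {A : Type*} [AddCommGroup A] [Module ℝ A] (X : PairedComplex A)

/-- A realization of the nondegenerate quotient `Q(A) = A / A_deg`:
a surjective chain map with kernel `A_deg` preserving pairings, gradings and degree. -/
def IsQuotientMap {B : Type*} [AddCommGroup B] [Module ℝ B]
    (Y : PairedComplex B) (q : A →ₗ[ℝ] B) : Prop :=
  Function.Surjective q ∧
  LinearMap.ker q = X.degSub ∧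
  (∀ x : A, q (X.d x) = Y.d (q x)) ∧
  (∀ x y : A, Y.pair (q x) (q y) = X.pair x y) ∧
  (∀ i : ℤ, ∀ x ∈ X.grading i, q x ∈ Y.grading i) ∧
  Y.n = X.n

/-- A Hodge star on a nonnegatively graded cochain complex with pairing of degree `n`:
a degree-reversing involution (up to sign) such that `(x,y) := ⟨x,⋆y⟩` is a positive
definite inner product. -/
def IsHodgeStar (star : A →ₗ[ℝ] A) : Prop :=
  (∀ i : ℤ, ∀ x ∈ X.grading i, star x ∈ X.grading (X.n - i)) ∧
  (∀ i : ℤ, ∀ x ∈ X.grading i, star (star x) = ((-1 : ℝ) ^ (i * (X.n - i))) • x) ∧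
  (∀ x y : A, X.pair x (star y) = X.pair y (star x)) ∧
  (∀ x : A, x ≠ 0 → 0 < X.pair x (star x))

end PairedComplex

/-- A differential graded algebra with pairing: a `PairedComplex` together with an
associative product of degree `0` satisfying the Leibniz rule and compatible with the
pairing. -/
structure PairedDGA (A : Type*) [AddCommGroup A] [Module ℝ A] extends
    PairedComplex A where
  /-- the product -/
  mul : A →ₗ[ℝ] A →ₗ[ℝ] A
  mul_degree : ∀ i j : ℤ, ∀ x ∈ grading i, ∀ y ∈ grading j, mul x y ∈ grading (i + j)
  mul_assoc' : ∀ x y z : A, mul (mul x y) z = mul x (mul y z)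
  leibniz : ∀ i : ℤ, ∀ x ∈ grading i, ∀ y : A,
      d (mul x y) = mul (d x) y + ((-1 : ℝ) ^ i) • mul x (d y)
  pair_mul : ∀ x y z : A, pair (mul x y) z = pair x (mul y z)

namespace PairedDGA

variable {A : Type*} [AddCommGroup A] [Module ℝ A] (Y : PairedDGA A)

/-- `one` is a unit for the product. -/
def IsUnit (one : A) : Prop :=
  one ≠ 0 ∧ one ∈ Y.grading 0 ∧ ∀ x : A, Y.mul one x = x ∧ Y.mul x one = x

/-- graded commutativity. -/
def IsCommutative : Prop :=
  ∀ i j : ℤ, ∀ x ∈ Y.grading i, ∀ y ∈ Y.grading j,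
    Y.mul x y = ((-1 : ℝ) ^ (i * j)) • Y.mul y x

/-- An orientation of degree `n` inducing the pairing: a chain-level functional
supported in degree `n`, vanishing on boundaries, nontrivial on cohomology,
with `⟨x,y⟩ = o(x∧y)`. -/
def IsOrientation (o : A →ₗ[ℝ] ℝ) : Prop :=
  (∀ i : ℤ, i ≠ Y.n → ∀ x ∈ Y.grading i, o x = 0) ∧
  (∀ x : A, o (Y.d x) = 0) ∧
  (∃ x : A, Y.d x = 0 ∧ o x ≠ 0) ∧
  (∀ x y : A, Y.pair x y = o (Y.mul x y))

/-- The small subalgebra `S_P`: the smallest graded dg-subalgebra containing the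
harmonic subspace `H_P = im π_P` and preserved by `P`. -/
def smallSub (P : A →ₗ[ℝ] A) : Submodule ℝ A :=
  sInf {S : Submodule ℝ A |
    LinearMap.range (Y.toPairedComplex.assocProj P) ≤ S ∧
    Y.toPairedComplex.IsGradedSubspace S ∧
    (∀ x ∈ S, Y.d x ∈ S) ∧
    (∀ x ∈ S, ∀ y ∈ S, Y.mul x y ∈ S) ∧
    (∀ x ∈ S, P x ∈ S)}

end PairedDGA

/-- Elements of `A` obtained from homogeneous elements of the harmonic subspace
`H_P = im π_P` by iterated applications of `P` and of the product. -/
inductive TreeGen {A : Type*} [AddCommGroup A] [Module ℝ A]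
    (Y : PairedDGA A) (P : A →ₗ[ℝ] A) : A → Prop
  | base : ∀ (i : ℤ) (x : A), x ∈ Y.grading i →
      x ∈ LinearMap.range (Y.toPairedComplex.assocProj P) → TreeGen Y P x
  | mul : ∀ x y : A, TreeGen Y P x → TreeGen Y P y → TreeGen Y P (Y.mul x y)
  | app : ∀ x : A, TreeGen Y P x → TreeGen Y P (P x)


namespace PairedComplex

variable {A : Type*} [AddCommGroup A] [Module ℝ A] (X : PairedComplex A)

/-- Induction on homogeneous components. -/
lemma hom_ind (p : A → Prop) (h0 : p 0)
    (hadd : ∀ x y : A, p x → p y → p (x + y))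
    (hhom : ∀ i : ℤ, ∀ x ∈ X.grading i, p x) : ∀ a : A, p a := by
  intro a
  have ha : a ∈ ⨆ i, X.grading i := by
    rw [X.internal.submodule_iSup_eq_top]; trivial
  exact Submodule.iSup_induction (motive := p) _ ha hhom h0 hadd

lemma mem_degSub {a : A} : a ∈ X.degSub ↔ ∀ y : A, X.pair a y = 0 := by
  constructor
  · intro h y; exact h y trivial
  · intro h y _; exact h y

/-- Graded symmetry with an arbitrary second argument. -/
lemma pair_flip (j : ℤ) (y : A) (hy : y ∈ X.grading j) (a : A) :
    X.pair y a = (-1 : ℝ) ^ (j * (X.n - j)) * X.pair a y := by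
  refine X.hom_ind (fun a => X.pair y a = (-1 : ℝ) ^ (j * (X.n - j)) * X.pair a y)
    ?_ ?_ ?_ a
  · simp
  · intro x x' hx hx'
    simp only [map_add, LinearMap.add_apply, hx, hx']
    ring
  · intro k x hx
    by_cases hjk : j + k = X.n
    · have hk : k = X.n - j := by omega
      subst hk
      exact X.pair_symm j _ y hy x hx
    · rw [X.pair_degree j k hjk y hy x hx,
        X.pair_degree k j (by omega) x hx y hy, mul_zero]

lemma degSub_pair_right {a : A} (ha : a ∈ X.degSub) (y : A) : X.pair y a = 0 := by
  refine X.hom_ind (fun y => X.pair y a = 0) ?_ ?_ ?_ y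
  · simp
  · intro x x' hx hx'
    rw [map_add, LinearMap.add_apply, hx, hx', add_zero]
  · intro j x hx
    rw [X.pair_flip j x hx a, X.mem_degSub.mp ha x, mul_zero]

lemma neg_one_zpow_ne_zero' (m : ℤ) : ((-1 : ℝ) ^ m) ≠ 0 :=
  zpow_ne_zero _ (by norm_num)

lemma degSub_d {a : A} (ha : a ∈ X.degSub) : X.d a ∈ X.degSub := by
  rw [mem_degSub]
  refine X.hom_ind (fun y => X.pair (X.d a) y = 0) ?_ ?_ ?_
  · simp
  · intro x x' hx hx'
    rw [map_add, hx, hx', add_zero]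
  · intro j x hx
    have h1 : X.pair (X.d x) a = 0 := X.degSub_pair_right ha _
    have h2 := X.pair_d j x hx a
    rw [h1] at h2
    have h3 : X.pair x (X.d a) = 0 := by
      rcases mul_eq_zero.mp h2.symm with h | h
      · exact absurd h (neg_one_zpow_ne_zero' _)
      · exact h
    have h4 := X.pair_flip j x hx (X.d a)
    rw [h3] at h4
    rcases mul_eq_zero.mp h4.symm with h | h
    · exact absurd h (neg_one_zpow_ne_zero' _)
    · exact h

/-- If `d x` is degenerate then `x` pairs to zero with all exact elements. -/
lemma pair_d_van {x : A} (hx : X.d x ∈ X.degSub) (y : A) :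
    X.pair x (X.d y) = 0 := by
  refine X.hom_ind (fun y => X.pair x (X.d y) = 0) ?_ ?_ ?_ y
  · simp
  · intro z z' hz hz'
    rw [map_add, map_add, hz, hz', add_zero]
  · intro j z hz
    have h1 : X.pair z (X.d x) = 0 := X.degSub_pair_right hx z
    have h2 := X.pair_d j z hz x
    rw [h1, mul_zero] at h2
    have h4 := X.pair_flip (j + 1) (X.d z) (X.d_degree j z hz) x
    rw [h2] at h4
    rcases mul_eq_zero.mp h4.symm with h | h
    · exact absurd h (neg_one_zpow_ne_zero' _)
    · exact h

open DirectSum in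
lemma degSub_graded : X.IsGradedSubspace X.degSub := by
  classical
  intro a ha
  haveI : Decomposition X.grading := X.internal.chooseDecomposition
  have hcomp : ∀ k : ℤ, ((decompose X.grading a k : A)) ∈ X.degSub := by
    intro k
    rw [mem_degSub]
    refine X.hom_ind _ ?_ ?_ ?_
    · simp
    · intro y z hy hz; rw [map_add, hy, hz, add_zero]
    · intro j z hz
      by_cases hkj : k + j = X.n
      · have hsum : X.pair a z = X.pair (decompose X.grading a k : A) z := by
          conv_lhs => rw [← DirectSum.sum_support_decompose X.grading a]
          rw [map_sum, LinearMap.sum_apply]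
          refine Finset.sum_eq_single k ?_ ?_
          · intro i _ hik
            exact X.pair_degree i j (by omega) _ (SetLike.coe_mem _) z hz
          · intro hk
            rw [DFinsupp.notMem_support_iff.mp hk]
            simp
        rw [← hsum]
        exact X.mem_degSub.mp ha z
      · exact X.pair_degree k j hkj _ (SetLike.coe_mem _) z hz
  have hmem : (∑ i ∈ (decompose X.grading a).support,
      ((decompose X.grading a i : A))) ∈ ⨆ i, X.degSub ⊓ X.grading i :=
    Submodule.sum_mem _ fun i _ => Submodule.mem_iSup_of_mem i
      (Submodule.mem_inf.mpr ⟨hcomp i, SetLike.coe_mem _⟩)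
  rwa [DirectSum.sum_support_decompose] at hmem

/-- Key lemma: an element of `C` whose differential is degenerate is itself
degenerate. -/
lemma c_mem_degSub {H C : Submodule ℝ A} (hH : X.IsHodge H C) {c : A}
    (hc : c ∈ C) (hdc : X.d c ∈ X.degSub) : c ∈ X.degSub := by
  obtain ⟨-, -, -, -, -, -, hsup1, -, hsup2, hCC, hCH⟩ := hH
  rw [mem_degSub]
  intro y
  have hy : y ∈ C ⊔ (LinearMap.ker X.d ⊓ ⊤) := by rw [hsup2]; trivial
  obtain ⟨c', hc', k, hk, rfl⟩ := Submodule.mem_sup.mp hy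
  have hk' : k ∈ H ⊔ Submodule.map X.d ⊤ := by rw [hsup1]; exact hk
  obtain ⟨h, hh, m, hm, rfl⟩ := Submodule.mem_sup.mp hk'
  obtain ⟨b, -, rfl⟩ := hm
  simp only [map_add]
  rw [hCC c hc c' hc', hCH c hc h hh, X.pair_d_van hdc b]
  ring

lemma degSub_acyclic (hHodge : X.IsHodgeType) (hcoh : X.CohomNondeg)
    {a : A} (ha : a ∈ X.degSub) (hda : X.d a = 0) :
    ∃ z ∈ X.degSub, a = X.d z := by
  obtain ⟨H, C, hH⟩ := hHodge
  obtain ⟨z, hz⟩ := hcoh a hda (fun y _ => X.mem_degSub.mp ha y)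
  have hz' : z ∈ C ⊔ (LinearMap.ker X.d ⊓ ⊤) := by
    rw [hH.2.2.2.2.2.2.2.2.1]; trivial
  obtain ⟨c, hc, k, hk, rfl⟩ := Submodule.mem_sup.mp hz'
  have hdk : X.d k = 0 := hk.1
  have hdc : a = X.d c := by rw [hz, map_add, hdk, add_zero]
  exact ⟨c, X.c_mem_degSub hH hc (hdc ▸ ha), hdc⟩

end PairedComplex


section Statements

variable {A B : Type*} [AddCommGroup A] [Module ℝ A] [AddCommGroup B] [Module ℝ B]
/-- if `A` is of Hodge type and the cohomology pairing is nondegenerate,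
then `A_deg` is an acyclic subcomplex and the quotient map onto the nondegenerate
quotient is a quasi-isomorphism. -/
theorem stmt9 (X : PairedComplex A)
    (hHodge : X.IsHodgeType) (hcoh : X.CohomNondeg)
    (Y : PairedComplex B) (q : A →ₗ[ℝ] B) (hq : X.IsQuotientMap Y q) :
    (X.IsSubcomplex X.degSub ∧
      ∀ x ∈ X.degSub, X.d x = 0 → ∃ z ∈ X.degSub, x = X.d z) ∧
    (∀ b : B, Y.d b = 0 → ∃ x : A, X.d x = 0 ∧ ∃ c : B, q x - b = Y.d c) ∧
    (∀ x : A, X.d x = 0 → (∃ c : B, q x = Y.d c) → ∃ z : A, x = X.d z) := by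
  obtain ⟨hsurj, hker, hcomm, hpair, hgr, hn⟩ := hq
  refine ⟨⟨⟨X.degSub_graded, fun x hx => X.degSub_d hx⟩,
    fun x hx hdx => X.degSub_acyclic hHodge hcoh hx hdx⟩, ?_, ?_⟩
  · -- surjectivity on cohomology
    intro b hb
    obtain ⟨x₀, rfl⟩ := hsurj b
    have hdx₀ : X.d x₀ ∈ X.degSub := by
      rw [← hker]
      exact LinearMap.mem_ker.mpr (by rw [hcomm, hb])
    obtain ⟨H, C, hH⟩ := hHodge
    have hx₀' : x₀ ∈ C ⊔ (LinearMap.ker X.d ⊓ ⊤) := by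
      rw [hH.2.2.2.2.2.2.2.2.1]; trivial
    obtain ⟨c, hc, k, hk, rfl⟩ := Submodule.mem_sup.mp hx₀'
    have hdk : X.d k = 0 := hk.1
    have hdc : X.d c ∈ X.degSub := by
      have : X.d (c + k) = X.d c := by rw [map_add, hdk, add_zero]
      rwa [this] at hdx₀
    have hcdeg : c ∈ X.degSub := X.c_mem_degSub hH hc hdc
    refine ⟨k, hdk, 0, ?_⟩
    have hqc : q c = 0 := by
      have : c ∈ LinearMap.ker q := by rw [hker]; exact hcdeg
      exact this
    rw [map_add, hqc, map_zero]
    abel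
  · -- injectivity on cohomology
    intro x hdx ⟨c, hc⟩
    obtain ⟨w, rfl⟩ := hsurj c
    have hqd : q x = q (X.d w) := by rw [hc, hcomm]
    have hmem : x - X.d w ∈ X.degSub := by
      rw [← hker]
      exact LinearMap.mem_ker.mpr (by rw [map_sub, hqd, sub_self])
    have hclosed : X.d (x - X.d w) = 0 := by
      rw [map_sub, hdx, X.d_sq, sub_zero]
    obtain ⟨z, hz⟩ := hcoh _ hclosed (fun y _ => X.mem_degSub.mp hmem y)
    exact ⟨w + z, by rw [map_add, ← hz]; abel⟩


end Statements
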